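/- Under the same assumptions (σ convex C¹ Lipschitz, H(t,·) convex and C¹ in p, p₀ = ∇σ(y) ∈ ℓ(t₀,x₀), characteristic x(t) = x₀ + ∫_{t₀}^t H_p(τ,p₀)dτ), assume additionally σ* is strictly convex on segments contained in its effective domain where the subdifferential is nonempty. Then for all t₁ ∈ [0,t₀): ℓ(t₁,x(t₁)) ⊆ ℓ(t₀,x₀). -/

import Mathlib

local notation "⟪" x ", " y "⟫" => @inner ℝ _ _ x y

open Filter Topology MeasureTheory



lemma convex_slope_bound (f : ℝ → ℝ) (hf : ConvexOn ℝ Set.univ f) {h : ℝ}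
    (h0 : 0 < h) (h1 : h ≤ 1) :
    f 0 - f (-1) ≤ (f h - f 0)/h ∧ (f h - f 0)/h ≤ f 1 - f 0 := by
  have key1 := hf.2 (Set.mem_univ (0:ℝ)) (Set.mem_univ (1:ℝ))
    (show (0:ℝ) ≤ 1 - h by linarith) (le_of_lt h0) (by ring)
  have key2 := hf.2 (Set.mem_univ (-1:ℝ)) (Set.mem_univ h)
    (show (0:ℝ) ≤ h/(1+h) by positivity) (show (0:ℝ) ≤ 1/(1+h) by positivity)
    (show h/(1+h) + 1/(1+h) = 1 by field_simp; ring)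
  simp only [smul_eq_mul] at key1 key2
  have e1 : (1-h) * 0 + h * 1 = h := by ring
  have e2 : h/(1+h) * (-1) + 1/(1+h) * h = 0 := by field_simp; ring
  rw [e1] at key1
  rw [e2] at key2
  have h1h : (0:ℝ) < 1 + h := by linarith
  constructor
  · rw [le_div_iff₀ h0]
    have key2' := mul_le_mul_of_nonneg_left key2 (le_of_lt h1h)
    have hne : (1+h) ≠ 0 := ne_of_gt h1h
    field_simp at key2'
    nlinarith
  · rw [div_le_iff₀ h0]; nlinarith

lemma convex_deriv_le (f : ℝ → ℝ) (hf : ConvexOn ℝ Set.univ f) {f' : ℝ}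
    (hd : HasDerivAt f f' 0) : f 0 - f (-1) ≤ f' ∧ f' ≤ f 1 - f 0 := by
  have htend : Tendsto (slope f 0) (𝓝[>] 0) (𝓝 f') :=
    (hasDerivAt_iff_tendsto_slope.1 hd).mono_left
      (nhdsWithin_mono 0 (by intro z hz; exact ne_of_gt hz))
  have hmem : Set.Ioc (0:ℝ) 1 ∈ 𝓝[>] (0:ℝ) := Ioc_mem_nhdsGT_of_mem (by norm_num)
  have hsl : ∀ h ∈ Set.Ioc (0:ℝ) 1, slope f 0 h = (f h - f 0)/h := by
    intro h hh; simp [slope_def_field]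
  constructor
  · refine ge_of_tendsto htend ?_
    filter_upwards [hmem] with h hh
    rw [hsl h hh]
    exact (convex_slope_bound f hf hh.1 hh.2).1
  · refine le_of_tendsto htend ?_
    filter_upwards [hmem] with h hh
    rw [hsl h hh]
    exact (convex_slope_bound f hf hh.1 hh.2).2

lemma line_convex {n : ℕ} (f : EuclideanSpace ℝ (Fin n) → ℝ)
    (hf : ConvexOn ℝ Set.univ f) (q v : EuclideanSpace ℝ (Fin n)) :
    ConvexOn ℝ Set.univ (fun s : ℝ => f (s • v + q)) := by
  have h := hf.comp_affineMap (AffineMap.lineMap q (q+v) : ℝ →ᵃ[ℝ] EuclideanSpace ℝ (Fin n))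
  have he : (f ∘ (AffineMap.lineMap q (q+v) : ℝ →ᵃ[ℝ] EuclideanSpace ℝ (Fin n)))
      = fun s : ℝ => f (s • v + q) := by
    funext s
    simp [AffineMap.lineMap_apply, add_sub_cancel_left]
  rw [he] at h
  simpa using h

lemma line_deriv {n : ℕ} (f : EuclideanSpace ℝ (Fin n) → ℝ)
    {g q : EuclideanSpace ℝ (Fin n)} (hg : HasGradientAt f g q)
    (v : EuclideanSpace ℝ (Fin n)) :
    HasDerivAt (fun s : ℝ => f (s • v + q)) ⟪g, v⟫ 0 := by
  have hline : HasDerivAt (fun s : ℝ => s • v + q) v 0 := by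
    simpa using ((hasDerivAt_id (0:ℝ)).smul_const v).add_const q
  have h0 : (0:ℝ) • v + q = q := by simp
  have hfd : HasFDerivAt f ((InnerProductSpace.toDual ℝ _) g) ((fun s : ℝ => s • v + q) 0) := by
    rw [show (fun s : ℝ => s • v + q) 0 = q by simp]
    exact hg.hasFDerivAt
  have := hfd.comp_hasDerivAt 0 hline
  simpa [InnerProductSpace.toDual_apply_apply, Function.comp_def] using this

lemma grad_line {n : ℕ} (f : EuclideanSpace ℝ (Fin n) → ℝ)
    (hf : ConvexOn ℝ Set.univ f) {g q : EuclideanSpace ℝ (Fin n)}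
    (hg : HasGradientAt f g q) (v : EuclideanSpace ℝ (Fin n)) :
    f q - f (-v + q) ≤ ⟪g, v⟫ ∧ ⟪g, v⟫ ≤ f (v + q) - f q := by
  have h := convex_deriv_le _ (line_convex f hf q v) (line_deriv f hg v)
  simpa [neg_smul] using h



/-- The Fenchel (Legendre) conjugate of `σ`, with values in `EReal`. -/
noncomputable def fenchelConj {n : ℕ} (σ : EuclideanSpace ℝ (Fin n) → ℝ)
    (q : EuclideanSpace ℝ (Fin n)) : EReal :=
  ⨆ x : EuclideanSpace ℝ (Fin n), ((⟪x, q⟫ - σ x : ℝ) : EReal)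

/-- The Hopf functional `φ(t,x,q) = ⟨x,q⟩ - σ*(q) - ∫₀ᵗ H(τ,q) dτ` (`EReal`-valued). -/
noncomputable def hopfPhi {n : ℕ} (σ : EuclideanSpace ℝ (Fin n) → ℝ)
    (H : ℝ → EuclideanSpace ℝ (Fin n) → ℝ) (t : ℝ)
    (x q : EuclideanSpace ℝ (Fin n)) : EReal :=
  ((⟪x, q⟫ - ∫ τ in (0:ℝ)..t, H τ q : ℝ) : EReal) - fenchelConj σ q

/-- The set `ℓ(t,x)` of maximizers over `q ∈ ℝⁿ` of `φ(t,x,·)`. -/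
def hopfArgmax {n : ℕ} (σ : EuclideanSpace ℝ (Fin n) → ℝ)
    (H : ℝ → EuclideanSpace ℝ (Fin n) → ℝ) (t : ℝ)
    (x : EuclideanSpace ℝ (Fin n)) : Set (EuclideanSpace ℝ (Fin n)) :=
  {q | ∀ q', hopfPhi σ H t x q' ≤ hopfPhi σ H t x q}

theorem stmt10 {n : ℕ} (T : ℝ) (hT : 0 < T) (L : NNReal)
    (σ : EuclideanSpace ℝ (Fin n) → ℝ)
    (hconv : ConvexOn ℝ Set.univ σ) (hσ : ContDiff ℝ 1 σ)
    (hlip : LipschitzWith L σ)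
    (H : ℝ → EuclideanSpace ℝ (Fin n) → ℝ)
    (Hp : ℝ → EuclideanSpace ℝ (Fin n) → EuclideanSpace ℝ (Fin n))
    (hH : ContinuousOn (fun p : ℝ × EuclideanSpace ℝ (Fin n) => H p.1 p.2)
      (Set.Icc 0 T ×ˢ Set.univ))
    (hHconv : ∀ t ∈ Set.Icc (0:ℝ) T, ConvexOn ℝ Set.univ (H t))
    (hHp : ∀ t q, HasGradientAt (H t) (Hp t q) q)
    -- strict convexity of σ* on segments of its effective domain where
    -- the subdifferential is nonempty:
    (hstrict : ∀ p q z : EuclideanSpace ℝ (Fin n), p ≠ q →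
      (∀ w, ((⟪z, w - q⟫ : ℝ) : EReal) + fenchelConj σ q ≤ fenchelConj σ w) →
      ((⟪z, p - q⟫ : ℝ) : EReal) + fenchelConj σ q < fenchelConj σ p)
    (t₀ : ℝ) (ht₀ : t₀ ∈ Set.Ioo 0 T)
    (y x₀ p₀ : EuclideanSpace ℝ (Fin n))
    (hp₀ : p₀ = gradient σ y)
    (hmax : p₀ ∈ hopfArgmax σ H t₀ x₀)
    (x : ℝ → EuclideanSpace ℝ (Fin n))
    (hx : ∀ t, x t = x₀ + ∫ τ in t₀..t, Hp τ p₀) :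
    ∀ t₁ ∈ Set.Ico (0:ℝ) t₀, hopfArgmax σ H t₁ (x t₁) ⊆ hopfArgmax σ H t₀ x₀ := by
  obtain ⟨ht₀0, ht₀T⟩ := ht₀
  intro t₁ ht₁ q₁ hq₁
  obtain ⟨ht₁0, ht₁t₀⟩ := ht₁
  classical
  have ht₁T : t₁ ≤ T := le_of_lt (lt_trans ht₁t₀ ht₀T)
  have hq₁' : ∀ q', hopfPhi σ H t₁ (x t₁) q' ≤ hopfPhi σ H t₁ (x t₁) q₁ := hq₁
  have hmax' : ∀ q', hopfPhi σ H t₀ x₀ q' ≤ hopfPhi σ H t₀ x₀ p₀ := hmax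
  -- Fenchel–Young inequality
  have hFY : ∀ (u q : EuclideanSpace ℝ (Fin n)),
      ((⟪u, q⟫ - σ u : ℝ) : EReal) ≤ fenchelConj σ q := fun u q => le_iSup
    (fun u : EuclideanSpace ℝ (Fin n) => ((⟪u, q⟫ - σ u : ℝ) : EReal)) u
  have hnbot : ∀ q, fenchelConj σ q ≠ ⊥ := by
    intro q h
    have h0 := hFY 0 q
    rw [h, le_bot_iff] at h0
    exact (EReal.coe_ne_bot _) h0
  -- the gradient of σ at y
  have hgy : HasGradientAt σ p₀ y := by
    rw [hp₀]; exact ((hσ.differentiable one_ne_zero) y).hasGradientAt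
  -- value of the conjugate at p₀
  set a₀ : ℝ := ⟪y, p₀⟫ - σ y with ha₀def
  have hA0 : fenchelConj σ p₀ = (a₀ : EReal) := by
    refine le_antisymm (iSup_le fun u => ?_) (hFY y p₀)
    refine EReal.coe_le_coe_iff.2 ?_
    have h1 := (grad_line σ hconv hgy (u - y)).2
    rw [sub_add_cancel] at h1
    have hin : ⟪p₀, u - y⟫ = ⟪u, p₀⟫ - ⟪y, p₀⟫ := by
      rw [real_inner_comm, inner_sub_left]
    rw [hin] at h1
    simp only [ha₀def]
    linarith
  -- continuity of H in time
  have hHc : ∀ q : EuclideanSpace ℝ (Fin n),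
      ContinuousOn (fun τ => H τ q) (Set.Icc 0 T) := by
    intro q
    exact hH.comp ((continuous_id.prodMk continuous_const).continuousOn)
      (fun τ hτ => ⟨hτ, Set.mem_univ _⟩)
  have hsubIcc : ∀ {t : ℝ}, 0 ≤ t → t ≤ T → Set.uIcc (0:ℝ) t ⊆ Set.Icc 0 T := by
    intro t h0 hT'
    rw [Set.uIcc_of_le h0]
    exact Set.Icc_subset_Icc le_rfl hT'
  have hsubIoc : ∀ {s t : ℝ}, 0 ≤ s → t ≤ T → Set.Ioc s t ⊆ Set.Icc 0 T := by
    intro s t h0 hT'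
    exact fun τ hτ => ⟨le_trans h0 (le_of_lt hτ.1), le_trans hτ.2 hT'⟩
  have hIqInt : ∀ (q : EuclideanSpace ℝ (Fin n)) {t : ℝ}, 0 ≤ t → t ≤ T →
      IntervalIntegrable (fun τ => H τ q) volume 0 t := by
    intro q t h0 hT'
    exact ((hHc q).mono (hsubIcc h0 hT')).intervalIntegrable
  -- the difference quotient functions
  set F : EuclideanSpace ℝ (Fin n) → EuclideanSpace ℝ (Fin n) → ℕ → ℝ → ℝ :=
    fun q v k τ => ((k:ℝ)+1) * (H τ (((k:ℝ)+1)⁻¹ • v + q) - H τ q) with hFdef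
  have hk_pos : ∀ k : ℕ, (0:ℝ) < ((k:ℝ)+1)⁻¹ := fun k => by positivity
  have hk_ne : ∀ k : ℕ, ((k:ℝ)+1) ≠ 0 := fun k => by positivity
  have hk_le1 : ∀ k : ℕ, ((k:ℝ)+1)⁻¹ ≤ 1 := fun k => by
    rw [inv_le_one_iff₀]
    right
    have : (0:ℝ) ≤ (k:ℝ) := Nat.cast_nonneg k
    linarith
  have hFslope : ∀ q v k τ,
      F q v k τ = ((fun s:ℝ => H τ (s • v + q)) (((k:ℝ)+1)⁻¹)
        - (fun s:ℝ => H τ (s • v + q)) 0) / ((k:ℝ)+1)⁻¹ := by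
    intro q v k τ
    simp only [hFdef, zero_smul, zero_add]
    rw [eq_div_iff (ne_of_gt (hk_pos k))]
    field_simp
  have hFtend : ∀ q v τ, Tendsto (fun k => F q v k τ) atTop (𝓝 ⟪Hp τ q, v⟫) := by
    intro q v τ
    have hd : HasDerivAt (fun s:ℝ => H τ (s • v + q)) ⟪Hp τ q, v⟫ 0 :=
      line_deriv _ (hHp τ q) v
    have hslope := hasDerivAt_iff_tendsto_slope.1 hd
    have hseq : Tendsto (fun k:ℕ => ((k:ℝ)+1)⁻¹) atTop (𝓝[≠] (0:ℝ)) := by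
      refine tendsto_nhdsWithin_of_tendsto_nhds_of_eventually_within _ ?_ ?_
      · have := tendsto_one_div_add_atTop_nhds_zero_nat (𝕜 := ℝ)
        simpa [one_div] using this
      · exact Eventually.of_forall fun k => ne_of_gt (hk_pos k)
    have hcomp := hslope.comp hseq
    refine hcomp.congr fun k => ?_
    simp only [Function.comp_apply, slope_def_field, hFslope q v k τ, sub_zero]
  have hFbound : ∀ q v k, ∀ τ ∈ Set.Icc (0:ℝ) T,
      |F q v k τ| ≤ |H τ (v + q) - H τ q| + |H τ (-v + q) - H τ q| := by
    intro q v k τ hτ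
    have hc := line_convex _ (hHconv τ hτ) q v
    have hb := convex_slope_bound _ hc (hk_pos k) (hk_le1 k)
    rw [← hFslope q v k τ] at hb
    simp only [zero_smul, zero_add, one_smul, neg_smul] at hb
    rw [abs_le]
    constructor
    · have := hb.1
      have h2 : -(|H τ (-v + q) - H τ q|) ≤ H τ q - H τ (-v + q) := by
        rw [neg_le]
        exact le_trans (by linarith [le_abs_self (H τ (-v+q) - H τ q)]) (le_refl _)
      have h3 : (0:ℝ) ≤ |H τ (v + q) - H τ q| := abs_nonneg _
      linarith
    · have := hb.2
      have h2 : H τ (v + q) - H τ q ≤ |H τ (v + q) - H τ q| := le_abs_self _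
      have h3 : (0:ℝ) ≤ |H τ (-v + q) - H τ q| := abs_nonneg _
      linarith
  -- measurability and integrability of the inner products with Hp
  have hFmeasT : ∀ q v k, AEStronglyMeasurable (F q v k) (volume.restrict (Set.Icc 0 T)) := by
    intro q v k
    refine ContinuousOn.aestronglyMeasurable ?_ measurableSet_Icc
    exact (continuousOn_const.mul (((hHc _).sub (hHc q))))
  have hgcont : ∀ q v : EuclideanSpace ℝ (Fin n), ContinuousOn
      (fun τ => |H τ (v + q) - H τ q| + |H τ (-v + q) - H τ q|) (Set.Icc 0 T) :=
    fun q v => (((hHc _).sub (hHc q)).abs).add (((hHc _).sub (hHc q)).abs)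
  have hgIntT : ∀ q v : EuclideanSpace ℝ (Fin n), IntegrableOn
      (fun τ => |H τ (v + q) - H τ q| + |H τ (-v + q) - H τ q|) (Set.Icc 0 T) volume :=
    fun q v => (hgcont q v).integrableOn_compact isCompact_Icc
  have hPmeasT : ∀ q v : EuclideanSpace ℝ (Fin n),
      AEStronglyMeasurable (fun τ => ⟪Hp τ q, v⟫) (volume.restrict (Set.Icc 0 T)) := by
    intro q v
    exact aestronglyMeasurable_of_tendsto_ae atTop (fun k => hFmeasT q v k)
      (ae_of_all _ fun τ => hFtend q v τ)
  have hPintT : ∀ q v : EuclideanSpace ℝ (Fin n),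
      IntegrableOn (fun τ => ⟪Hp τ q, v⟫) (Set.Icc 0 T) volume := by
    intro q v
    refine Integrable.mono' (hgIntT q v) (hPmeasT q v) ?_
    refine (ae_restrict_iff' measurableSet_Icc).2 (ae_of_all _ fun τ hτ => ?_)
    have hg := grad_line (H τ) (hHconv τ hτ) (hHp τ q) v
    rw [Real.norm_eq_abs, abs_le]
    constructor
    · have h2 : -(|H τ (-v + q) - H τ q|) ≤ H τ q - H τ (-v + q) := by
        rw [neg_le]
        linarith [le_abs_self (H τ (-v+q) - H τ q)]
      linarith [hg.1, abs_nonneg (H τ (v + q) - H τ q)]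
    · linarith [hg.2, le_abs_self (H τ (v + q) - H τ q), abs_nonneg (H τ (-v + q) - H τ q)]
  have hPii : ∀ (q v : EuclideanSpace ℝ (Fin n)) {s t : ℝ}, 0 ≤ s → t ≤ T → s ≤ t →
      IntervalIntegrable (fun τ => ⟪Hp τ q, v⟫) volume s t := by
    intro q v s t h0 hT' hst
    refine (IntegrableOn.mono_set (hPintT q v) ?_).intervalIntegrable
    rw [Set.uIcc_of_le hst]
    exact fun τ hτ => ⟨le_trans h0 hτ.1, le_trans hτ.2 hT'⟩
  -- dominated convergence: derivative of the time-integral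
  have hlim : ∀ (q v : EuclideanSpace ℝ (Fin n)) {t : ℝ}, 0 ≤ t → t ≤ T →
      Tendsto (fun k : ℕ => ((k:ℝ)+1) * ((∫ τ in (0:ℝ)..t, H τ (((k:ℝ)+1)⁻¹ • v + q))
        - ∫ τ in (0:ℝ)..t, H τ q)) atTop (𝓝 (∫ τ in (0:ℝ)..t, ⟪Hp τ q, v⟫)) := by
    intro q v t h0 hT'
    have hIocsub : Set.Ioc (0:ℝ) t ⊆ Set.Icc 0 T := hsubIoc le_rfl hT'
    have hmono : volume.restrict (Set.Ioc (0:ℝ) t) ≤ volume.restrict (Set.Icc 0 T) :=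
      Measure.restrict_mono hIocsub le_rfl
    have h1 : ∀ k : ℕ, ((k:ℝ)+1) * ((∫ τ in (0:ℝ)..t, H τ (((k:ℝ)+1)⁻¹ • v + q))
        - ∫ τ in (0:ℝ)..t, H τ q) = ∫ τ in Set.Ioc (0:ℝ) t, F q v k τ := by
      intro k
      rw [intervalIntegral.integral_of_le h0, intervalIntegral.integral_of_le h0,
        ← integral_sub ((hIqInt _ h0 hT').1) ((hIqInt q h0 hT').1),
        ← smul_eq_mul, ← integral_smul]
      simp only [hFdef, smul_eq_mul]
    have hgoal : (∫ τ in (0:ℝ)..t, ⟪Hp τ q, v⟫) = ∫ τ in Set.Ioc (0:ℝ) t, ⟪Hp τ q, v⟫ :=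
      intervalIntegral.integral_of_le h0
    rw [hgoal]
    have hDCT := tendsto_integral_of_dominated_convergence
      (μ := volume.restrict (Set.Ioc (0:ℝ) t))
      (F := fun k => F q v k) (f := fun τ => ⟪Hp τ q, v⟫)
      (fun τ => |H τ (v + q) - H τ q| + |H τ (-v + q) - H τ q|)
      (fun k => (hFmeasT q v k).mono_measure hmono)
      ((hgIntT q v).mono_set hIocsub)
      (fun k => (ae_restrict_iff' measurableSet_Ioc).2
        (ae_of_all _ fun τ hτ => by
          rw [Real.norm_eq_abs]; exact hFbound q v k τ (hIocsub hτ)))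
      (ae_of_all _ fun τ => hFtend q v τ)
    refine Tendsto.congr (fun k => (h1 k).symm) hDCT
  -- vector-valued integrability of Hp τ p₀
  have hHpVecT : IntegrableOn (fun τ => Hp τ p₀) (Set.Icc 0 T) volume := by
    have hrepr : (fun τ => Hp τ p₀) = fun τ => ∑ i : Fin n,
        ⟪Hp τ p₀, (EuclideanSpace.basisFun (Fin n) ℝ) i⟫ • (EuclideanSpace.basisFun (Fin n) ℝ) i := by
      funext τ
      calc Hp τ p₀ = ∑ i : Fin n, ⟪(EuclideanSpace.basisFun (Fin n) ℝ) i, Hp τ p₀⟫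
            • (EuclideanSpace.basisFun (Fin n) ℝ) i :=
            ((EuclideanSpace.basisFun (Fin n) ℝ).sum_repr' (Hp τ p₀)).symm
        _ = ∑ i : Fin n, ⟪Hp τ p₀, (EuclideanSpace.basisFun (Fin n) ℝ) i⟫
            • (EuclideanSpace.basisFun (Fin n) ℝ) i :=
            Finset.sum_congr rfl fun i _ => by rw [real_inner_comm]
    rw [hrepr]
    refine integrable_finset_sum _ fun i _ => ?_
    exact (hPintT p₀ _).smul_const _
  have hHpii : ∀ {s t : ℝ}, 0 ≤ s → t ≤ T → s ≤ t →
      IntervalIntegrable (fun τ => Hp τ p₀) volume s t := by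
    intro s t h0 hT' hst
    refine (IntegrableOn.mono_set hHpVecT ?_).intervalIntegrable
    rw [Set.uIcc_of_le hst]
    exact fun τ hτ => ⟨le_trans h0 hτ.1, le_trans hτ.2 hT'⟩
  have hinnerInt : ∀ (u : EuclideanSpace ℝ (Fin n)) {s t : ℝ}, 0 ≤ s → t ≤ T → s ≤ t →
      ⟪(∫ τ in s..t, Hp τ p₀), u⟫ = ∫ τ in s..t, ⟪Hp τ p₀, u⟫ := by
    intro u s t h0 hT' hst
    have hint : IntegrableOn (fun τ => Hp τ p₀) (Set.Ioc s t) volume := by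
      refine hHpVecT.mono_set ?_
      exact fun τ hτ => ⟨le_trans h0 (le_of_lt hτ.1), le_trans hτ.2 hT'⟩
    rw [intervalIntegral.integral_of_le hst, intervalIntegral.integral_of_le hst]
    calc ⟪(∫ τ in Set.Ioc s t, Hp τ p₀), u⟫
        = ⟪u, (∫ τ in Set.Ioc s t, Hp τ p₀)⟫ := real_inner_comm _ _
      _ = ∫ τ in Set.Ioc s t, ⟪u, Hp τ p₀⟫ := (integral_inner hint u).symm
      _ = ∫ τ in Set.Ioc s t, ⟪Hp τ p₀, u⟫ :=
          integral_congr_ae (ae_of_all _ fun τ => real_inner_comm _ _)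
  -- the candidate subgradient of σ* at p₀
  have ht₀0' : (0:ℝ) ≤ t₀ := le_of_lt ht₀0
  have ht₀T' : t₀ ≤ T := le_of_lt ht₀T
  set z₀ : EuclideanSpace ℝ (Fin n) := x₀ - ∫ τ in (0:ℝ)..t₀, Hp τ p₀ with hz₀def
  have hz₀inner : ∀ u : EuclideanSpace ℝ (Fin n),
      ⟪z₀, u⟫ = ⟪x₀, u⟫ - ∫ τ in (0:ℝ)..t₀, ⟪Hp τ p₀, u⟫ := by
    intro u
    rw [hz₀def, inner_sub_left, hinnerInt u le_rfl ht₀T' ht₀0']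
  have hzsub : ∀ w, ((⟪z₀, w - p₀⟫ : ℝ) : EReal) + fenchelConj σ p₀ ≤ fenchelConj σ w := by
    intro w
    rcases eq_or_ne (fenchelConj σ w) ⊤ with htop | hnetop
    · rw [htop]; exact le_top
    obtain ⟨b, hb⟩ : ∃ b : ℝ, fenchelConj σ w = (b : EReal) :=
      ⟨(fenchelConj σ w).toReal, (EReal.coe_toReal hnetop (hnbot w)).symm⟩
    set v : EuclideanSpace ℝ (Fin n) := w - p₀ with hvdef
    have hqh : ∀ k : ℕ, fenchelConj σ (((k:ℝ)+1)⁻¹ • v + p₀)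
        ≤ (((1 - ((k:ℝ)+1)⁻¹) * a₀ + ((k:ℝ)+1)⁻¹ * b : ℝ) : EReal) := by
      intro k
      refine iSup_le fun u => ?_
      refine EReal.coe_le_coe_iff.2 ?_
      have h1 : ⟪u, p₀⟫ - σ u ≤ a₀ := by
        have h := hFY u p₀; rw [hA0] at h; exact EReal.coe_le_coe_iff.1 h
      have h2 : ⟪u, w⟫ - σ u ≤ b := by
        have h := hFY u w; rw [hb] at h; exact EReal.coe_le_coe_iff.1 h
      have hin : ⟪u, ((k:ℝ)+1)⁻¹ • v + p₀⟫
          = (1 - ((k:ℝ)+1)⁻¹) * ⟪u, p₀⟫ + ((k:ℝ)+1)⁻¹ * ⟪u, w⟫ := by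
        rw [inner_add_right, inner_smul_right, hvdef, inner_sub_right]
        ring
      rw [hin]
      have hk1 := hk_pos k
      have hk2 := hk_le1 k
      nlinarith
    have hmaxk : ∀ k : ℕ, ⟪x₀, ((k:ℝ)+1)⁻¹ • v + p₀⟫
        - (∫ τ in (0:ℝ)..t₀, H τ (((k:ℝ)+1)⁻¹ • v + p₀))
        - ((1 - ((k:ℝ)+1)⁻¹) * a₀ + ((k:ℝ)+1)⁻¹ * b)
        ≤ ⟪x₀, p₀⟫ - (∫ τ in (0:ℝ)..t₀, H τ p₀) - a₀ := by
      intro k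
      have hm := hmax' (((k:ℝ)+1)⁻¹ • v + p₀)
      unfold hopfPhi at hm
      rw [hA0] at hm
      have hstep :
          ((⟪x₀, ((k:ℝ)+1)⁻¹ • v + p₀⟫ - (∫ τ in (0:ℝ)..t₀, H τ (((k:ℝ)+1)⁻¹ • v + p₀)) : ℝ) : EReal)
            - (((1 - ((k:ℝ)+1)⁻¹) * a₀ + ((k:ℝ)+1)⁻¹ * b : ℝ) : EReal)
          ≤ ((⟪x₀, p₀⟫ - (∫ τ in (0:ℝ)..t₀, H τ p₀) : ℝ) : EReal) - (a₀ : EReal) :=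
        le_trans (EReal.sub_le_sub (le_refl _) (hqh k)) hm
      rw [← EReal.coe_sub, ← EReal.coe_sub] at hstep
      exact EReal.coe_le_coe_iff.1 hstep
    have hineq : ∀ k : ℕ, ⟪x₀, v⟫
        - ((k:ℝ)+1) * ((∫ τ in (0:ℝ)..t₀, H τ (((k:ℝ)+1)⁻¹ • v + p₀))
          - ∫ τ in (0:ℝ)..t₀, H τ p₀) ≤ b - a₀ := by
      intro k
      have h := hmaxk k
      rw [inner_add_right, inner_smul_right] at h
      have hk1 := hk_pos k
      set Ik := (∫ τ in (0:ℝ)..t₀, H τ (((k:ℝ)+1)⁻¹ • v + p₀)) with hIk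
      set I0 := (∫ τ in (0:ℝ)..t₀, H τ p₀) with hI0
      have hexp : ((k:ℝ)+1)⁻¹ * (⟪x₀, v⟫ - ((k:ℝ)+1) * (Ik - I0))
          = ((k:ℝ)+1)⁻¹ * ⟪x₀, v⟫ - (Ik - I0) := by
        rw [mul_sub, ← mul_assoc, inv_mul_cancel₀ (hk_ne k), one_mul]
      have h2 : ((k:ℝ)+1)⁻¹ * (⟪x₀, v⟫ - ((k:ℝ)+1) * (Ik - I0)) ≤ ((k:ℝ)+1)⁻¹ * (b - a₀) := by
        rw [hexp]
        linarith
      exact le_of_mul_le_mul_left h2 hk1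
    have hK := hlim p₀ v ht₀0' ht₀T'
    have hfin : ⟪x₀, v⟫ - (∫ τ in (0:ℝ)..t₀, ⟪Hp τ p₀, v⟫) ≤ b - a₀ :=
      le_of_tendsto (tendsto_const_nhds.sub hK) (Eventually.of_forall hineq)
    have hzb : ⟪z₀, v⟫ + a₀ ≤ b := by
      rw [hz₀inner v]; linarith
    rw [hA0, hb, ← EReal.coe_add]
    exact EReal.coe_le_coe_iff.2 hzb
  -- finiteness of the conjugate at q₁
  have hq₁p : hopfPhi σ H t₁ (x t₁) p₀ ≤ hopfPhi σ H t₁ (x t₁) q₁ := hq₁' p₀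
  have hne₁ : fenchelConj σ q₁ ≠ ⊤ := by
    intro htop
    unfold hopfPhi at hq₁p
    rw [htop, hA0, EReal.sub_top, ← EReal.coe_sub, le_bot_iff] at hq₁p
    exact (EReal.coe_ne_bot _) hq₁p
  obtain ⟨b₁, hb₁⟩ : ∃ b₁ : ℝ, fenchelConj σ q₁ = (b₁ : EReal) :=
    ⟨(fenchelConj σ q₁).toReal, (EReal.coe_toReal hne₁ (hnbot q₁)).symm⟩
  by_cases hqp : q₁ = p₀
  · rw [hqp]; exact hmax
  -- strict inequality from strict convexity
  have hst := hstrict q₁ p₀ z₀ hqp hzsub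
  rw [hA0, hb₁, ← EReal.coe_add] at hst
  have hst' : ⟪z₀, q₁ - p₀⟫ + a₀ < b₁ := EReal.coe_lt_coe_iff.1 hst
  -- real form of the t₁-maximality at p₀
  have hR1 : ⟪x t₁, p₀⟫ - (∫ τ in (0:ℝ)..t₁, H τ p₀) - a₀
      ≤ ⟪x t₁, q₁⟫ - (∫ τ in (0:ℝ)..t₁, H τ q₁) - b₁ := by
    unfold hopfPhi at hq₁p
    rw [hA0, hb₁, ← EReal.coe_sub, ← EReal.coe_sub] at hq₁p
    exact EReal.coe_le_coe_iff.1 hq₁p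
  set v : EuclideanSpace ℝ (Fin n) := q₁ - p₀ with hvdef
  have hxt₁ : ∀ u : EuclideanSpace ℝ (Fin n),
      ⟪x t₁, u⟫ = ⟪x₀, u⟫ - ∫ τ in t₁..t₀, ⟪Hp τ p₀, u⟫ := by
    intro u
    rw [hx t₁, inner_add_left, intervalIntegral.integral_symm t₁ t₀, inner_neg_left,
      hinnerInt u ht₁0 ht₀T' (le_of_lt ht₁t₀)]
    ring
  have hKadd : (∫ τ in (0:ℝ)..t₁, ⟪Hp τ p₀, v⟫) + (∫ τ in t₁..t₀, ⟪Hp τ p₀, v⟫)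
      = ∫ τ in (0:ℝ)..t₀, ⟪Hp τ p₀, v⟫ :=
    intervalIntegral.integral_add_adjacent_intervals
      (hPii p₀ v le_rfl ht₁T ht₁0) (hPii p₀ v ht₁0 ht₀T' (le_of_lt ht₁t₀))
  -- convexity of H gives nonnegativity of the Bregman term
  have hD : (0:ℝ) ≤ (∫ τ in (0:ℝ)..t₁, H τ q₁) - (∫ τ in (0:ℝ)..t₁, H τ p₀)
      - ∫ τ in (0:ℝ)..t₁, ⟪Hp τ p₀, v⟫ := by
    have hi1 : IntegrableOn (fun τ => H τ q₁) (Set.Ioc (0:ℝ) t₁) volume :=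
      (hIqInt q₁ ht₁0 ht₁T).1
    have hi2 : IntegrableOn (fun τ => H τ p₀) (Set.Ioc (0:ℝ) t₁) volume :=
      (hIqInt p₀ ht₁0 ht₁T).1
    have hi3 : IntegrableOn (fun τ => ⟪Hp τ p₀, v⟫) (Set.Ioc (0:ℝ) t₁) volume :=
      (hPii p₀ v le_rfl ht₁T ht₁0).1
    have hsplit : ∫ τ in Set.Ioc (0:ℝ) t₁, (H τ q₁ - H τ p₀ - ⟪Hp τ p₀, v⟫)
        = (∫ τ in Set.Ioc (0:ℝ) t₁, H τ q₁) - (∫ τ in Set.Ioc (0:ℝ) t₁, H τ p₀)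
          - ∫ τ in Set.Ioc (0:ℝ) t₁, ⟪Hp τ p₀, v⟫ := by
      have hi12 : IntegrableOn (fun τ => H τ q₁ - H τ p₀) (Set.Ioc (0:ℝ) t₁) volume :=
        hi1.sub hi2
      rw [integral_sub hi12 hi3, integral_sub hi1 hi2]
    rw [intervalIntegral.integral_of_le ht₁0, intervalIntegral.integral_of_le ht₁0,
      intervalIntegral.integral_of_le ht₁0, ← hsplit]
    refine setIntegral_nonneg measurableSet_Ioc fun τ hτ => ?_
    have hg := (grad_line (H τ) (hHconv τ (hsubIoc le_rfl ht₁T hτ)) (hHp τ p₀) v).2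
    rw [hvdef, sub_add_cancel] at hg
    linarith
  -- assemble the contradiction
  exfalso
  have e1 : ⟪z₀, v⟫ = ⟪x₀, v⟫ - ∫ τ in (0:ℝ)..t₀, ⟪Hp τ p₀, v⟫ := hz₀inner v
  have e2 : ⟪x t₁, v⟫ = ⟪x₀, v⟫ - ∫ τ in t₁..t₀, ⟪Hp τ p₀, v⟫ := hxt₁ v
  have e3 : ⟪x t₁, v⟫ = ⟪x t₁, q₁⟫ - ⟪x t₁, p₀⟫ := by
    rw [hvdef, inner_sub_right]
  linarith
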